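/- Let G and H be complex Hilbert spaces, let A, B, S be bounded operators on H with S boundedly invertible, and let Π₁, Π₂, Γ₁, Γ₂ be bounded operators from G to H satisfying AS − SB = Π₁Π₂*, SΓ₁ = Π₁, and Γ₂*S = Π₂*. Assume the minimality conditions: the closed linear span of ⋃_{n≥0} AⁿΠ₁G equals H, the closed linear span of ⋃_{n≥0} (A*)ⁿΓ₂G equals H, the closed linear span of ⋃_{n≥0} BⁿΓ₁G equals H, and the closed linear span of ⋃_{n≥0} (B*)ⁿΠ₂G equals H. Let H = L₁ ⊕ L₂ be an orthogonal decomposition with orthogonal projections P₁, P₂, suppose AP₂ = P₂AP₂ and BP₁ = P₁BP₁, and suppose S₁₁ = P₁SP₁ (as an operator on L₁) is invertible on L₁. Set A₁₁ = P₁AP₁ on L₁, A₂₂ = P₂AP₂ on L₂, and T₂₂ = P₂S⁻¹P₂ on L₂ (which is then invertible on L₂). Then for every z ∈ ℂ such that A − zI is invertible on H, A₁₁ − zI is invertible on L₁, and A₂₂ − zI is invertible on L₂, the transfer function W_A(z) = I − Γ₂*(A − zI)⁻¹Π₁ factors as W_A(z) = W₂(z)W₁(z), where W₁(z) = I − Π₂*P₁S₁₁⁻¹(A₁₁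 − zI)⁻¹P₁Π₁ and W₂(z) = I − Γ₂*P₂(A₂₂ − zI)⁻¹T₂₂⁻¹P₂Γ₁. -/

import Mathlib

open ContinuousLinearMap

private lemma mulc {R : Type*} [Ring R] {a b c : R} (h : a * b = c) (x : R) :
    a * (b * x) = c * x := by rw [← mul_assoc, h]

private lemma mulc2 {R : Type*} [Ring R] {a b c d : R} (h : a * (b * c) = d) (x : R) :
    a * (b * (c * x)) = d * x := by rw [← mul_assoc b c x, ← mul_assoc, h]

/-- Theorem 3.1: the fundamental factorization theorem for operator-valued
transfer functions `W_A(z) = I - Γ₂*(A - zI)⁻¹Φ₁` of an operator node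
satisfying the operator identity `AS - SB = Φ₁Φ₂*`, `SΓ₁ = Φ₁`, `Γ₂*S = Φ₂*`,
with minimality conditions, an orthogonal decomposition `H = L₁ ⊕ L₂`
(orthogonal projections `P₁, P₂`), triangularity `AP₂ = P₂AP₂`, `BP₁ = P₁BP₁`,
and invertibility of `S` and of `S₁₁ = P₁SP₁` on `L₁`.  Inverses of operators
supported on `Lⱼ` are taken relative to the unit `Pⱼ` of `Lⱼ`. -/
theorem stmt_1
    {G H : Type*} [NormedAddCommGroup G] [InnerProductSpace ℂ G] [CompleteSpace G]
    [NormedAddCommGroup H] [InnerProductSpace ℂ H] [CompleteSpace H]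
    (A B S Sinv : H →L[ℂ] H)
    (Φ₁ Φ₂ Γ₁ Γ₂ : G →L[ℂ] H)
    (hS₁ : S ∘L Sinv = 1) (hS₂ : Sinv ∘L S = 1)
    (hid : A ∘L S - S ∘L B = Φ₁ ∘L adjoint Φ₂)
    (hid1 : S ∘L Γ₁ = Φ₁)
    (hid2 : adjoint Γ₂ ∘L S = adjoint Φ₂)
    (hmin1 : (⨆ n : ℕ, LinearMap.range (((A ^ n) ∘L Φ₁) : G →ₗ[ℂ] H)).topologicalClosure = ⊤)
    (hmin2 : (⨆ n : ℕ, LinearMap.range ((((adjoint A) ^ n) ∘L Γ₂) : G →ₗ[ℂ] H)).topologicalClosure = ⊤)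
    (hmin3 : (⨆ n : ℕ, LinearMap.range (((B ^ n) ∘L Γ₁) : G →ₗ[ℂ] H)).topologicalClosure = ⊤)
    (hmin4 : (⨆ n : ℕ, LinearMap.range ((((adjoint B) ^ n) ∘L Φ₂) : G →ₗ[ℂ] H)).topologicalClosure = ⊤)
    (P₁ P₂ : H →L[ℂ] H)
    (hP₁sa : IsSelfAdjoint P₁) (hP₁idem : P₁ ∘L P₁ = P₁)
    (hP₂sa : IsSelfAdjoint P₂) (hP₂idem : P₂ ∘L P₂ = P₂)
    (hsum : P₁ + P₂ = 1)
    (htriA : A ∘L P₂ = P₂ ∘L A ∘L P₂)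
    (htriB : B ∘L P₁ = P₁ ∘L B ∘L P₁)
    (S11inv : H →L[ℂ] H)
    (hsupp : P₁ ∘L S11inv ∘L P₁ = S11inv)
    (hleft : S11inv ∘L (P₁ ∘L S ∘L P₁) = P₁)
    (hright : (P₁ ∘L S ∘L P₁) ∘L S11inv = P₁) :
    ∃ T22inv : H →L[ℂ] H,
      (P₂ ∘L T22inv ∘L P₂ = T22inv ∧
       T22inv ∘L (P₂ ∘L Sinv ∘L P₂) = P₂ ∧
       (P₂ ∘L Sinv ∘L P₂) ∘L T22inv = P₂) ∧
      ∀ (z : ℂ) (Ainv N₁ N₂ : H →L[ℂ] H),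
        Ainv ∘L (A - z • 1) = 1 → (A - z • 1) ∘L Ainv = 1 →
        P₁ ∘L N₁ ∘L P₁ = N₁ →
        N₁ ∘L (P₁ ∘L A ∘L P₁ - z • P₁) = P₁ →
        (P₁ ∘L A ∘L P₁ - z • P₁) ∘L N₁ = P₁ →
        P₂ ∘L N₂ ∘L P₂ = N₂ →
        N₂ ∘L (P₂ ∘L A ∘L P₂ - z • P₂) = P₂ →
        (P₂ ∘L A ∘L P₂ - z • P₂) ∘L N₂ = P₂ →
        (1 : G →L[ℂ] G) - adjoint Γ₂ ∘L Ainv ∘L Φ₁ =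
          ((1 : G →L[ℂ] G) - adjoint Γ₂ ∘L P₂ ∘L N₂ ∘L T22inv ∘L P₂ ∘L Γ₁) ∘L
          ((1 : G →L[ℂ] G) - adjoint Φ₂ ∘L P₁ ∘L S11inv ∘L N₁ ∘L P₁ ∘L Φ₁) := by
  have pp : P₁ * P₁ = P₁ := hP₁idem
  have qq : P₂ * P₂ = P₂ := hP₂idem
  have sr : S * Sinv = 1 := hS₁
  have rs : Sinv * S = 1 := hS₂
  have hsupp' : P₁ * (S11inv * P₁) = S11inv := hsupp
  have hleft' : S11inv * (P₁ * (S * P₁)) = P₁ := hleft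
  have hright' : (P₁ * (S * P₁)) * S11inv = P₁ := hright
  have htriA' : A * P₂ = P₂ * (A * P₂) := htriA
  have htriB' : B * P₁ = P₁ * (B * P₁) := htriB
  have hq2 : P₂ = 1 - P₁ := by rw [← hsum]; abel
  have pq : P₁ * P₂ = 0 := by rw [hq2, mul_sub, mul_one, pp, sub_self]
  have qp : P₂ * P₁ = 0 := by rw [hq2, sub_mul, one_mul, pp, sub_self]
  have pm : P₁ * S11inv = S11inv := by
    conv_lhs => rw [← hsupp', ← mul_assoc, pp]
    exact hsupp'
  have mp : S11inv * P₁ = S11inv := by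
    conv_lhs => rw [← hsupp', mul_assoc, mul_assoc, pp]
    exact hsupp'
  have mq : S11inv * P₂ = 0 := by rw [← mp, mul_assoc, pq, mul_zero]
  have qm : P₂ * S11inv = 0 := by rw [← pm, ← mul_assoc, qp, zero_mul]
  have mspE : S11inv * (S * P₁) = P₁ := by
    conv_lhs => rw [← mp, mul_assoc]
    exact hleft'
  have psmE : P₁ * (S * S11inv) = P₁ := by
    conv_lhs => rw [← pm, ← mul_assoc S, ← mul_assoc]
    exact hright'
  have paqE : P₁ * (A * P₂) = 0 := by rw [htriA', ← mul_assoc, pq, zero_mul]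
  have mAq : S11inv * (A * P₂) = 0 := by rw [← mp, mul_assoc, paqE, mul_zero]
  have qbpE : P₂ * (B * P₁) = 0 := by rw [htriB', ← mul_assoc, qp, zero_mul]
  have sq' : S * P₂ = S - S * P₁ := by rw [hq2, mul_sub, mul_one]
  have rq' : Sinv * P₂ = Sinv - Sinv * P₁ := by rw [hq2, mul_sub, mul_one]
  have mspc : ∀ x : H →L[ℂ] H, S11inv * (S * (P₁ * x)) = P₁ * x := fun x => mulc2 mspE x
  have psmc : ∀ x : H →L[ℂ] H, P₁ * (S * (S11inv * x)) = P₁ * x := fun x => mulc2 psmE x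
  have pmc : ∀ x : H →L[ℂ] H, P₁ * (S11inv * x) = S11inv * x := fun x => mulc pm x
  have qbpc : ∀ x : H →L[ℂ] H, P₂ * (B * (P₁ * x)) = 0 := fun x => by
    rw [mulc2 qbpE, zero_mul]
  have qBmc : ∀ x : H →L[ℂ] H, P₂ * (B * (S11inv * x)) = 0 := fun x => by
    conv_lhs => rw [← pmc x]
    exact qbpc _
  have sqr : ∀ x : H →L[ℂ] H, S * (P₂ * (Sinv * x)) = x - S * (P₁ * (Sinv * x)) := by
    intro x
    rw [← mul_assoc, sq', sub_mul, mulc sr, one_mul, mul_assoc]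
  -- the Schur complement T₀
  set T₀ : H →L[ℂ] H := P₂ * (S * P₂) - P₂ * (S * (S11inv * (S * P₂))) with hT₀
  have Talt : T₀ = P₂ * S - P₂ * (S * (S11inv * S)) := by
    rw [hT₀, sq']
    simp only [mul_sub, mspE]
    abel
  have TR : ∀ x : H →L[ℂ] H,
      T₀ * (P₂ * (Sinv * x)) = P₂ * x - P₂ * (S * (S11inv * x)) := by
    intro x
    rw [Talt, sub_mul]
    simp only [mul_assoc]
    simp only [sqr]
    simp only [mul_sub, mspc]
    abel
  have TqE : T₀ * P₂ = T₀ := by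
    rw [hT₀]
    simp only [sub_mul, mul_assoc, qq]
  refine ⟨T₀, ⟨?_, ?_, ?_⟩, ?_⟩
  · -- P₂ ∘L T₀ ∘L P₂ = T₀
    show P₂ * (T₀ * P₂) = T₀
    rw [TqE, hT₀, mul_sub, mulc qq, mulc qq]
  · -- T₀ ∘L (P₂ ∘L Sinv ∘L P₂) = P₂
    show T₀ * (P₂ * (Sinv * P₂)) = P₂
    rw [TR, qq, mq, mul_zero, mul_zero, sub_zero]
  · -- (P₂ ∘L Sinv ∘L P₂) ∘L T₀ = P₂
    show (P₂ * (Sinv * P₂)) * T₀ = P₂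
    have rqsE : Sinv * (P₂ * S) = 1 - Sinv * (P₁ * S) := by
      rw [← mul_assoc, rq', sub_mul, rs, mul_assoc]
    have rqs : ∀ x : H →L[ℂ] H,
        Sinv * (P₂ * (S * x)) = x - Sinv * (P₁ * (S * x)) := by
      intro x
      rw [← mul_assoc, rq', sub_mul, mulc rs, one_mul, mul_assoc]
    rw [Talt, mul_sub]
    simp only [mul_assoc]
    rw [mulc qq, mulc qq, rqsE, rqs]
    simp only [mul_sub, mul_one, psmc]
    have qmc : ∀ x : H →L[ℂ] H, P₂ * (S11inv * x) = 0 := fun x => by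
      rw [mulc qm, zero_mul]
    rw [qmc]
    abel
  · -- the factorization
    intro z Ainv N₁ N₂ hw1 hw2 hnp hn1 hn2 hkp hk1 hk2
    have hw2' : (A - z • (1 : H →L[ℂ] H)) * Ainv = 1 := hw2
    have hnp' : P₁ * (N₁ * P₁) = N₁ := hnp
    have hkp' : P₂ * (N₂ * P₂) = N₂ := hkp
    have pn : P₁ * N₁ = N₁ := by
      conv_lhs => rw [← hnp', ← mul_assoc, pp]
      exact hnp'
    have np : N₁ * P₁ = N₁ := by
      conv_lhs => rw [← hnp', mul_assoc, mul_assoc, pp]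
      exact hnp'
    have qk : P₂ * N₂ = N₂ := by
      conv_lhs => rw [← hkp', ← mul_assoc, qq]
      exact hkp'
    have kq : N₂ * P₂ = N₂ := by
      conv_lhs => rw [← hkp', mul_assoc, mul_assoc, qq]
      exact hkp'
    have kp : N₂ * P₁ = 0 := by rw [← kq, mul_assoc, qp, mul_zero]
    have pk : P₁ * N₂ = 0 := by rw [← qk, ← mul_assoc, pq, zero_mul]
    have kqc : ∀ x : H →L[ℂ] H, N₂ * (P₂ * x) = N₂ * x := fun x => mulc kq x
    have qkc : ∀ x : H →L[ℂ] H, P₂ * (N₂ * x) = N₂ * x := fun x => mulc qk x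
    have npc : ∀ x : H →L[ℂ] H, N₁ * (P₁ * x) = N₁ * x := fun x => mulc np x
    -- resolvent relations
    have nApE : N₁ * (A * P₁) = P₁ + z • N₁ := by
      have h : N₁ * (P₁ * (A * P₁) - z • P₁) = P₁ := hn1
      rw [mul_sub, ← mul_assoc, np, mul_smul_comm, np] at h
      exact sub_eq_iff_eq_add.mp h
    have pAnE : P₁ * (A * N₁) = P₁ + z • N₁ := by
      have h : (P₁ * (A * P₁) - z • P₁) * N₁ = P₁ := hn2
      rw [sub_mul, smul_mul_assoc, pn, mul_assoc, mul_assoc, pn] at h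
      exact sub_eq_iff_eq_add.mp h
    have kAqE : N₂ * (A * P₂) = P₂ + z • N₂ := by
      have h : N₂ * (P₂ * (A * P₂) - z • P₂) = P₂ := hk1
      rw [mul_sub, ← mul_assoc, kq, mul_smul_comm, kq] at h
      exact sub_eq_iff_eq_add.mp h
    have qAkE : P₂ * (A * N₂) = P₂ + z • N₂ := by
      have h : (P₂ * (A * P₂) - z • P₂) * N₂ = P₂ := hk2
      rw [sub_mul, smul_mul_assoc, qk, mul_assoc, mul_assoc, qk] at h
      exact sub_eq_iff_eq_add.mp h
    have pAk : P₁ * (A * N₂) = 0 := by rw [← qk, mulc2 paqE, zero_mul]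
    have AkE : A * N₂ = P₂ + z • N₂ := by
      conv_lhs => rw [← one_mul (A * N₂), ← hsum]
      rw [add_mul, pAk, zero_add]
      exact qAkE
    have nAq : N₁ * (A * P₂) = 0 := by rw [← np, mul_assoc, paqE, mul_zero]
    have nAE : N₁ * A = P₁ + z • N₁ := by
      conv_lhs => rw [← mul_one A, ← hsum]
      rw [mul_add, mul_add, nAq, add_zero]
      exact nApE
    have kAqc : ∀ x : H →L[ℂ] H,
        N₂ * (A * (P₂ * x)) = P₂ * x + z • (N₂ * x) := fun x => by
      rw [← mul_assoc A, ← mul_assoc, kAqE, add_mul, smul_mul_assoc]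
    have pAnc : ∀ x : H →L[ℂ] H,
        P₁ * (A * (N₁ * x)) = P₁ * x + z • (N₁ * x) := fun x => by
      rw [← mul_assoc A, ← mul_assoc, pAnE, add_mul, smul_mul_assoc]
    have mAqc : ∀ x : H →L[ℂ] H, S11inv * (A * (P₂ * x)) = 0 := fun x => by
      rw [← mul_assoc A, ← mul_assoc, mAq, zero_mul]
    have mAnc : ∀ x : H →L[ℂ] H,
        S11inv * (A * (N₁ * x)) = S11inv * x + z • (S11inv * (N₁ * x)) := fun x => by
      conv_lhs => rw [← mp]
      rw [mul_assoc, pAnc, mul_add, mulc mp, mul_smul_comm]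
    -- the resolvent identity: Ainv = N₁ + N₂ - N₂ A N₁
    have W1 : N₁ * (A - z • (1 : H →L[ℂ] H)) = P₁ := by
      rw [mul_sub, nAE, mul_smul_comm, mul_one]
      abel
    have split : A * P₁ + (A * P₂ - z • (1 : H →L[ℂ] H)) = A - z • 1 := by
      rw [← add_sub_assoc, ← mul_add, hsum, mul_one]
    have W2 : N₂ * (A - z • (1 : H →L[ℂ] H)) = N₂ * (A * P₁) + P₂ := by
      rw [← split, mul_add, mul_sub, kAqE, mul_smul_comm, mul_one]
      abel
    have W3 : (N₂ * (A * N₁)) * (A - z • (1 : H →L[ℂ] H)) = N₂ * (A * P₁) := by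
      rw [mul_assoc, mul_assoc, W1]
    have W4 : (N₁ + N₂ - N₂ * (A * N₁)) * (A - z • (1 : H →L[ℂ] H)) = 1 := by
      rw [sub_mul, add_mul, W1, W2, W3, ← hsum]
      abel
    have W5 : Ainv = N₁ + N₂ - N₂ * (A * N₁) := by
      rw [← one_mul Ainv, ← W4, mul_assoc, hw2', mul_one]
    -- block identities for S and S11inv
    have D1 : S * S11inv = P₁ + P₂ * (S * S11inv) := by
      conv_lhs => rw [← one_mul (S * S11inv), ← hsum]
      rw [add_mul, psmE]
    have D2 : S * (S11inv * N₁) = N₁ + P₂ * (S * (S11inv * N₁)) := by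
      conv_lhs => rw [← mul_assoc, D1, add_mul, mul_assoc, mul_assoc]
      rw [pn]
    have hV : S * (S11inv * (N₁ * S)) = N₁ * S + P₂ * (S * (S11inv * (N₁ * S))) := by
      have h := congrArg (fun y => y * S) D2
      simp only [add_mul, mul_assoc] at h
      exact h
    have qV : P₂ * (S * (S11inv * (N₁ * S))) = S * (S11inv * (N₁ * S)) - N₁ * S := by
      conv_rhs => rw [hV]
      abel
    -- merging helpers for compositions G →L H
    have mergeH : ∀ (x y : H →L[ℂ] H) (g : G →L[ℂ] H),
        x ∘L (y ∘L g) = (x * y) ∘L g := fun x y g =>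
      (ContinuousLinearMap.comp_assoc x y g).symm
    have hΓ₁ : Γ₁ = Sinv ∘L Φ₁ := by
      rw [← hid1, ← ContinuousLinearMap.comp_assoc, hS₂]
      exact (ContinuousLinearMap.id_comp Γ₁).symm
    have hu0 : Γ₁ ∘L adjoint Φ₂ = Sinv * (A * S) - B := by
      rw [hΓ₁, ContinuousLinearMap.comp_assoc, ← hid]
      show Sinv * (A * S - S * B) = Sinv * (A * S) - B
      rw [mul_sub, mulc rs, one_mul]
    have hu2 : ∀ g : G →L[ℂ] H,
        Γ₁ ∘L (adjoint Φ₂ ∘L g) = (Sinv * (A * S) - B) ∘L g := fun g => by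
      rw [← ContinuousLinearMap.comp_assoc, hu0]
    have sand : ∀ {Z Z' : H →L[ℂ] H}, Z = Z' →
        adjoint Γ₂ ∘L (Z ∘L Γ₁) = adjoint Γ₂ ∘L (Z' ∘L Γ₁) := by
      intro Z Z' h
      rw [h]
    have expand : ∀ X Y : G →L[ℂ] G,
        (1 - X) ∘L (1 - Y) = 1 - Y - X + X ∘L Y := by
      intro X Y
      show (1 - X) * (1 - Y) = 1 - Y - X + X * Y
      noncomm_ring
    -- the three pieces of the factorization identity
    have e2 : P₂ * (N₂ * (T₀ * P₂)) = N₂ * T₀ := by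
      rw [TqE, ← mul_assoc, qk]
    have e3 : S * (P₁ * (S11inv * (N₁ * (P₁ * S)))) = S * (S11inv * (N₁ * S)) := by
      rw [pmc, npc]
    have kTE : N₂ * T₀ = N₂ * S - N₂ * (S * (S11inv * S)) := by
      rw [Talt, mul_sub, kqc, kqc]
    have e4 : P₂ * (N₂ * (T₀ * (P₂ * ((Sinv * (A * S) - B) *
          (P₁ * (S11inv * (N₁ * (P₁ * S)))))))) =
        N₂ * (A * (N₁ * S)) + P₂ * (S * (S11inv * (N₁ * S)))
          - N₂ * (S * (S11inv * S)) := by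
      have Usp : (Sinv * (A * S) - B) * (S11inv * (N₁ * S)) =
          Sinv * (A * (S * (S11inv * (N₁ * S)))) - B * (S11inv * (N₁ * S)) := by
        rw [sub_mul, mul_assoc, mul_assoc]
      rw [pmc, npc, Usp, mul_sub P₂, qBmc, sub_zero,
        TR, mul_sub N₂, kqc, kqc, mul_sub P₂, qkc, qkc]
      conv_lhs => rw [hV]
      simp only [mul_add, kAqc, mAqc, mAnc, add_zero, mul_smul_comm]
      abel
    have Zmain : Ainv * S = P₂ * (N₂ * (T₀ * P₂)) + S * (P₁ * (S11inv * (N₁ * (P₁ * S))))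
        - P₂ * (N₂ * (T₀ * (P₂ * ((Sinv * (A * S) - B) *
            (P₁ * (S11inv * (N₁ * (P₁ * S)))))))) := by
      rw [e2, e4, e3, W5, sub_mul, add_mul, mul_assoc N₂, mul_assoc A, kTE, qV]
      abel
    rw [expand, ← hid1]
    simp only [ContinuousLinearMap.comp_assoc]
    rw [hu2, ← hid2]
    simp only [ContinuousLinearMap.comp_assoc, mergeH, mul_assoc]
    rw [sand Zmain]
    simp only [ContinuousLinearMap.add_comp, ContinuousLinearMap.sub_comp,
      ContinuousLinearMap.comp_add, ContinuousLinearMap.comp_sub]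
    abel
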